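/- Let f : {-1,1}^n → {-1,1} and let p be a polynomial of weight 1 sign-representing f with margin δ. Then the sign matrix M of f ∘ XOR (indexed by subsets T₁, T₂ ⊆ [n] via characteristic vectors, with M(T₁,T₂) = f(w_{T₁} ⊕ w_{T₂})) admits unit vectors u_T, v_T ∈ ℝ^{2^n}, for T ⊆ [n], such that sgn(⟨u_{T₁}, v_{T₂}⟩) = M(T₁,T₂) and |⟨u_{T₁}, v_{T₂}⟩| ≥ δ for all T₁, T₂. Consequently the matrix margin of M_{f∘XOR} is at least m(f). -/

import Mathlib

open scoped BigOperators RealInnerProductSpace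

noncomputable section

/-- sign value of a bit: `true` ↦ -1, `false` ↦ 1 (±1 encoding of the cube). -/
def sgnv (b : Bool) : ℝ := if b then -1 else 1

/-- the Fourier character χ_S on the cube. -/
def chi {ι : Type*} (S : Finset ι) (x : ι → Bool) : ℝ := ∏ i ∈ S, sgnv (x i)

/-- evaluation of the multilinear polynomial with coefficients `c`. -/
def pEval {ι : Type*} [Fintype ι] [DecidableEq ι] (c : Finset ι → ℝ) (x : ι → Bool) : ℝ :=
  ∑ S : Finset ι, c S * chi S x

/-- weight of a polynomial: sum of absolute values of its coefficients. -/
def wt {ι : Type*} [Fintype ι] [DecidableEq ι] (c : Finset ι → ℝ) : ℝ :=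
  ∑ S : Finset ι, |c S|

/-- `c` sign represents `f`. -/
def SignRep {ι : Type*} [Fintype ι] [DecidableEq ι] (c : Finset ι → ℝ)
    (f : (ι → Bool) → ℝ) : Prop := ∀ x, 0 < pEval c x * f x

/-- polynomial margin of `f`. -/
def margin {ι : Type*} [Fintype ι] [DecidableEq ι] (f : (ι → Bool) → ℝ) : ℝ :=
  sSup {δ : ℝ | ∃ c : Finset ι → ℝ, wt c ≤ 1 ∧ SignRep c f ∧ ∀ x, δ ≤ pEval c x * f x}

/-- the margin of a sign matrix `A`: the supremum over realizations by vectors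
`u_a, v_b` with `sgn⟨u_a, v_b⟩ = A a b` of `min_{a,b} |⟨u_a,v_b⟩|/(‖u_a‖‖v_b‖)`. -/
def matMargin {α β : Type*} (A : α → β → ℝ) : ℝ :=
  sSup {δ : ℝ | ∃ N : ℕ, ∃ u : α → EuclideanSpace ℝ (Fin N),
    ∃ v : β → EuclideanSpace ℝ (Fin N),
    (∀ a b, 0 < ⟪u a, v b⟫ * A a b) ∧
    ∀ a b, δ ≤ |⟪u a, v b⟫| / (‖u a‖ * ‖v b‖)}

/-- the communication matrix of `f ∘ XOR`, indexed by subsets `T₁, T₂ ⊆ [n]` via their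
characteristic vectors: `M(T₁,T₂) = f(w_{T₁} ⊕ w_{T₂})`. -/
def Mxor {n : ℕ} (f : (Fin n → Bool) → ℝ) : Finset (Fin n) → Finset (Fin n) → ℝ :=
  fun T₁ T₂ => f (fun i => xor (decide (i ∈ T₁)) (decide (i ∈ T₂)))

namespace MMGaux

lemma sgnv_mul_self (b : Bool) : sgnv b * sgnv b = 1 := by cases b <;> norm_num [sgnv]

lemma sgnv_xor (a b : Bool) : sgnv (xor a b) = sgnv a * sgnv b := by
  cases a <;> cases b <;> norm_num [sgnv]

lemma chi_mul_self {ι : Type*} (S : Finset ι) (x : ι → Bool) : chi S x * chi S x = 1 := by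
  rw [chi, ← Finset.prod_mul_distrib]
  simp [sgnv_mul_self]

lemma chi_xor {ι : Type*} (S : Finset ι) (x y : ι → Bool) :
    chi S (fun i => xor (x i) (y i)) = chi S x * chi S y := by
  rw [chi, chi, chi, ← Finset.prod_mul_distrib]
  exact Finset.prod_congr rfl fun i _ => sgnv_xor _ _

lemma sign_mul_abs' (x : ℝ) : Real.sign x * |x| = x := by
  rcases lt_trichotomy x 0 with h | h | h
  · rw [Real.sign_of_neg h, abs_of_neg h]; ring
  · simp [h]
  · rw [Real.sign_of_pos h, abs_of_pos h]; ring

lemma sign_sq_mul_abs (x : ℝ) : Real.sign x * Real.sign x * |x| = |x| := by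
  rcases lt_trichotomy x 0 with h | h | h
  · rw [Real.sign_of_neg h]; ring
  · simp [h]
  · rw [Real.sign_of_pos h]; ring

variable {n : ℕ}

/-- characteristic vector of a set. -/
def wch (T : Finset (Fin n)) : Fin n → Bool := fun i => decide (i ∈ T)

def uV (c : Finset (Fin n) → ℝ) (T : Finset (Fin n)) : EuclideanSpace ℝ (Finset (Fin n)) :=
  WithLp.toLp 2 (fun S => Real.sqrt |c S| * chi S (wch T))

def vV (c : Finset (Fin n) → ℝ) (T : Finset (Fin n)) : EuclideanSpace ℝ (Finset (Fin n)) :=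
  WithLp.toLp 2 (fun S => Real.sign (c S) * (Real.sqrt |c S| * chi S (wch T)))

lemma inner_uv (c : Finset (Fin n) → ℝ) (T₁ T₂ : Finset (Fin n)) :
    ⟪uV c T₁, vV c T₂⟫ = pEval c (fun i => xor (wch T₁ i) (wch T₂ i)) := by
  rw [PiLp.inner_apply, pEval]
  refine Finset.sum_congr rfl fun S _ => ?_
  simp only [uV, vV, PiLp.toLp_apply, RCLike.inner_apply, starRingEnd_apply, star_trivial, chi_xor]
  have h1 : Real.sqrt |c S| * Real.sqrt |c S| = |c S| := Real.mul_self_sqrt (abs_nonneg _)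
  have h2 : Real.sign (c S) * |c S| = c S := sign_mul_abs' _
  linear_combination (Real.sign (c S) * chi S (wch T₁) * chi S (wch T₂)) * h1
    + (chi S (wch T₁) * chi S (wch T₂)) * h2

lemma norm_uV (c : Finset (Fin n) → ℝ) (T : Finset (Fin n)) :
    ‖uV c T‖ = Real.sqrt (wt c) := by
  rw [EuclideanSpace.norm_eq, wt]
  congr 1
  refine Finset.sum_congr rfl fun S _ => ?_
  simp only [uV, PiLp.toLp_apply, Real.norm_eq_abs, sq_abs]
  have h1 : Real.sqrt |c S| * Real.sqrt |c S| = |c S| := Real.mul_self_sqrt (abs_nonneg _)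
  have h2 := chi_mul_self S (wch T)
  linear_combination (chi S (wch T) * chi S (wch T)) * h1 + |c S| * h2

lemma norm_vV (c : Finset (Fin n) → ℝ) (T : Finset (Fin n)) :
    ‖vV c T‖ = Real.sqrt (wt c) := by
  rw [EuclideanSpace.norm_eq, wt]
  congr 1
  refine Finset.sum_congr rfl fun S _ => ?_
  simp only [vV, PiLp.toLp_apply, Real.norm_eq_abs, sq_abs]
  have h1 : Real.sqrt |c S| * Real.sqrt |c S| = |c S| := Real.mul_self_sqrt (abs_nonneg _)
  have h2 := chi_mul_self S (wch T)
  have h3 := sign_sq_mul_abs (c S)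
  linear_combination (Real.sign (c S) * Real.sign (c S) * chi S (wch T) * chi S (wch T)) * h1
    + (Real.sign (c S) * Real.sign (c S) * |c S|) * h2 + h3

lemma wt_nonneg (c : Finset (Fin n) → ℝ) : 0 ≤ wt c :=
  Finset.sum_nonneg fun _ _ => abs_nonneg _

lemma wt_pos_of_signRep {c : Finset (Fin n) → ℝ} {f : (Fin n → Bool) → ℝ}
    (hs : SignRep c f) : 0 < wt c := by
  rcases (wt_nonneg c).eq_or_lt with h | h
  · exfalso
    have hc : ∀ S, c S = 0 := by
      intro S
      have := (Finset.sum_eq_zero_iff_of_nonneg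
        (fun S _ => abs_nonneg (c S))).1 h.symm S (Finset.mem_univ S)
      exact abs_eq_zero.1 this
    have h0 := hs fun _ => false
    rw [pEval] at h0
    simp [hc] at h0
  · exact h

lemma abs_pEval_ge {c : Finset (Fin n) → ℝ} {f : (Fin n → Bool) → ℝ} {δ : ℝ}
    {x : Fin n → Bool} (hx : f x = 1 ∨ f x = -1) (h : δ ≤ pEval c x * f x) :
    δ ≤ |pEval c x| := by
  rcases hx with h1 | h1 <;> rw [h1] at h
  · rw [mul_one] at h; exact h.trans (le_abs_self _)
  · rw [mul_neg_one] at h; exact h.trans (neg_le_abs _)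

end MMGaux

open MMGaux in
/-- if a weight-1 polynomial `p` sign represents `f` with margin `δ`, then
there are unit vectors `u_T, v_T ∈ ℝ^{2^n}` realizing the sign matrix of `f ∘ XOR` with
all inner products of absolute value at least `δ`; consequently the matrix margin of
`M_{f∘XOR}` is at least the polynomial margin `m(f)`. -/
theorem matrix_margin_ge (n : ℕ) (f : (Fin n → Bool) → ℝ)
    (hf : ∀ x, f x = 1 ∨ f x = -1) :
    (∀ (c : Finset (Fin n) → ℝ) (δ : ℝ), wt c = 1 → SignRep c f →
      (∀ x, δ ≤ pEval c x * f x) →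
      ∃ u v : Finset (Fin n) → EuclideanSpace ℝ (Finset (Fin n)),
        (∀ T, ‖u T‖ = 1) ∧ (∀ T, ‖v T‖ = 1) ∧
        (∀ T₁ T₂, 0 < ⟪u T₁, v T₂⟫ * Mxor f T₁ T₂) ∧
        (∀ T₁ T₂, δ ≤ |⟪u T₁, v T₂⟫|)) ∧
    margin f ≤ matMargin (Mxor f) := by
  have hMx : ∀ T₁ T₂ : Finset (Fin n),
      Mxor f T₁ T₂ = f (fun i => xor (wch T₁ i) (wch T₂ i)) := fun _ _ => rfl
  constructor
  · intro c δ hw hs hb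
    refine ⟨uV c, vV c, ?_, ?_, ?_, ?_⟩
    · intro T; rw [norm_uV, hw, Real.sqrt_one]
    · intro T; rw [norm_vV, hw, Real.sqrt_one]
    · intro T₁ T₂; rw [inner_uv, hMx]; exact hs _
    · intro T₁ T₂; rw [inner_uv]; exact abs_pEval_ge (hf _) (hb _)
  · -- the matMargin set is bounded above by 1
    have hbdd : BddAbove {δ : ℝ |
        ∃ N : ℕ, ∃ u : Finset (Fin n) → EuclideanSpace ℝ (Fin N),
        ∃ v : Finset (Fin n) → EuclideanSpace ℝ (Fin N),
        (∀ a b, 0 < ⟪u a, v b⟫ * Mxor f a b) ∧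
        ∀ a b, δ ≤ |⟪u a, v b⟫| / (‖u a‖ * ‖v b‖)} := by
      refine ⟨1, ?_⟩
      rintro δ ⟨N, u, v, _, hb⟩
      refine (hb ∅ ∅).trans ?_
      by_cases hz : ‖u ∅‖ * ‖v ∅‖ = 0
      · rw [hz, div_zero]; exact zero_le_one
      · have hpos : 0 < ‖u ∅‖ * ‖v ∅‖ := lt_of_le_of_ne (by positivity) (Ne.symm hz)
        rw [div_le_one hpos]
        exact abs_real_inner_le_norm _ _
    -- 0 is in the matMargin set
    have h0mem : (0 : ℝ) ∈ {δ : ℝ |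
        ∃ N : ℕ, ∃ u : Finset (Fin n) → EuclideanSpace ℝ (Fin N),
        ∃ v : Finset (Fin n) → EuclideanSpace ℝ (Fin N),
        (∀ a b, 0 < ⟪u a, v b⟫ * Mxor f a b) ∧
        ∀ a b, δ ≤ |⟪u a, v b⟫| / (‖u a‖ * ‖v b‖)} := by
      set e := Fintype.equivFin (Finset (Fin n)) with he
      set u0 : Finset (Fin n) → EuclideanSpace ℝ (Fin (Fintype.card (Finset (Fin n)))) :=
        fun a => WithLp.toLp 2 (fun i => if e a = i then (1 : ℝ) else 0) with hu0
      set v0 : Finset (Fin n) → EuclideanSpace ℝ (Fin (Fintype.card (Finset (Fin n)))) :=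
        fun b => WithLp.toLp 2 (fun i => Mxor f (e.symm i) b) with hv0
      have hinner : ∀ a b, ⟪u0 a, v0 b⟫ = Mxor f a b := by
        intro a b
        rw [PiLp.inner_apply]
        simp [hu0, hv0, RCLike.inner_apply, ite_mul, Finset.sum_ite_eq]
      refine ⟨Fintype.card (Finset (Fin n)), u0, v0, ?_, ?_⟩
      · intro a b
        rw [hinner]
        rcases hf (fun i => xor (decide (i ∈ a)) (decide (i ∈ b))) with h | h <;>
          rw [Mxor, h] <;> norm_num
      · intro a b
        exact div_nonneg (abs_nonneg _) (by positivity)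
    apply Real.sSup_le
    · rintro δ ⟨c, hw, hs, hb⟩
      refine le_csSup hbdd ?_
      set F := LinearIsometryEquiv.piLpCongrLeft 2 ℝ ℝ (Fintype.equivFin (Finset (Fin n)))
      refine ⟨Fintype.card (Finset (Fin n)), fun T => F (uV c T), fun T => F (vV c T), ?_, ?_⟩
      · intro a b
        rw [LinearIsometryEquiv.inner_map_map, inner_uv, hMx]
        exact hs _
      · intro a b
        rw [LinearIsometryEquiv.inner_map_map, inner_uv,
          LinearIsometryEquiv.norm_map, LinearIsometryEquiv.norm_map, norm_uV, norm_vV]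
        set s := Real.sqrt (wt c) with hsdef
        have hsp : 0 < s := Real.sqrt_pos.2 (wt_pos_of_signRep hs)
        have hs1 : s ≤ 1 := Real.sqrt_le_one.2 hw
        have h1 : δ ≤ |pEval c (fun i => xor (wch a i) (wch b i))| :=
          abs_pEval_ge (hf _) (hb _)
        refine h1.trans ?_
        rw [le_div_iff₀ (by positivity)]
        exact mul_le_of_le_one_right (abs_nonneg _)
          (mul_le_one₀ hs1 hsp.le hs1)
    · exact le_csSup hbdd h0mem
end
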